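/- Let σ₁, σ₂, σ₀ : [0,1] → [κ,K] with 0 < κ < K, let t_{i,n} = i/n, and for j = 1,2 define Q_n(σ_j) = |T_{2,n}(σ_j) + (1/2)∫₀¹ (σ₀² − σ_j²)/σ_j² du| where T_{2,n}(σ) = −(1/(2n))∑_{i=1}^n (Δ_i X)² [1/∫_{t_{i-1,n}}^{t_{i,n}} σ² du − 1/∫_{t_{i-1,n}}^{t_{i,n}} σ₀² du] with Δ_i X = X_{t_{i,n}} − X_{t_{i-1,n}}. Then |Q_n(σ₁) − Q_n(σ₂)| ≤ (K/κ⁴)‖σ₁−σ₂‖_∞ · ∑_{i=1}^n (Δ_i X)² + (K³/κ⁴)‖σ₁−σ₂‖_∞. -/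

import Mathlib

open MeasureTheory

theorem Qn_lipschitz_in_sigma (κ K : ℝ) (hκ : 0 < κ) (hκK : κ < K)
    (σ₀ σ₁ σ₂ : ℝ → ℝ) (hσ₀ : Measurable σ₀) (hσ₁ : Measurable σ₁)
    (hσ₂ : Measurable σ₂)
    (hσ₀b : ∀ u ∈ Set.Icc (0:ℝ) 1, σ₀ u ∈ Set.Icc κ K)
    (hσ₁b : ∀ u ∈ Set.Icc (0:ℝ) 1, σ₁ u ∈ Set.Icc κ K)
    (hσ₂b : ∀ u ∈ Set.Icc (0:ℝ) 1, σ₂ u ∈ Set.Icc κ K)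
    (X : ℝ → ℝ) (n : ℕ) (hn : 0 < n)
    (T : (ℝ → ℝ) → ℝ)
    (hT : ∀ σ : ℝ → ℝ, T σ =
      -(1 / (2 * (n : ℝ))) * ∑ i ∈ Finset.Icc 1 n,
        (X ((i : ℝ) / n) - X (((i : ℝ) - 1) / n)) ^ 2 *
          (1 / (∫ u in ((i : ℝ) - 1) / n..(i : ℝ) / n, σ u ^ 2) -
           1 / (∫ u in ((i : ℝ) - 1) / n..(i : ℝ) / n, σ₀ u ^ 2)))
    (Q : (ℝ → ℝ) → ℝ)
    (hQ : ∀ σ : ℝ → ℝ, Q σ =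
      |T σ + (1 / 2) * ∫ u in (0:ℝ)..1, (σ₀ u ^ 2 - σ u ^ 2) / σ u ^ 2|) :
    |Q σ₁ - Q σ₂| ≤
      (K / κ ^ 4) * (⨆ u : Set.Icc (0:ℝ) 1, |σ₁ u - σ₂ u|) *
        (∑ i ∈ Finset.Icc 1 n, (X ((i : ℝ) / n) - X (((i : ℝ) - 1) / n)) ^ 2) +
      (K ^ 3 / κ ^ 4) * ⨆ u : Set.Icc (0:ℝ) 1, |σ₁ u - σ₂ u| := by
  have hn' : (0:ℝ) < n := by exact_mod_cast hn
  have hnne : (n:ℝ) ≠ 0 := ne_of_gt hn'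
  have hK0 : (0:ℝ) < K := lt_trans hκ hκK
  set M := (⨆ u : Set.Icc (0:ℝ) 1, |σ₁ u - σ₂ u|) with hMdef
  have hbdd : BddAbove (Set.range fun u : Set.Icc (0:ℝ) 1 => |σ₁ ↑u - σ₂ ↑u|) := by
    refine ⟨K - κ, ?_⟩
    rintro x ⟨u, rfl⟩
    obtain ⟨h1a, h1b⟩ := hσ₁b u u.2
    obtain ⟨h2a, h2b⟩ := hσ₂b u u.2
    rw [abs_sub_le_iff]
    constructor <;> linarith
  have hM : ∀ u ∈ Set.Icc (0:ℝ) 1, |σ₁ u - σ₂ u| ≤ M := fun u hu =>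
    le_ciSup hbdd (⟨u, hu⟩ : Set.Icc (0:ℝ) 1)
  have hM0 : 0 ≤ M := le_trans (abs_nonneg _) (hM 0 ⟨le_refl 0, zero_le_one⟩)
  -- integrability of σ² on subintervals of [0,1]
  have hii : ∀ (σ : ℝ → ℝ), Measurable σ → (∀ u ∈ Set.Icc (0:ℝ) 1, σ u ∈ Set.Icc κ K) →
      ∀ a b : ℝ, 0 ≤ a → a ≤ b → b ≤ 1 →
      IntervalIntegrable (fun u => σ u ^ 2) volume a b := by
    intro σ hσm hσb a b ha hab hb1
    rw [intervalIntegrable_iff]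
    have hfin : volume (Set.uIoc a b) ≠ ⊤ := by
      rw [Set.uIoc_of_le hab]; exact (measure_Ioc_lt_top).ne
    have hbd : ∀ᵐ x ∂(volume.restrict (Set.uIoc a b)), ‖σ x ^ 2‖ ≤ K ^ 2 := by
      refine (ae_restrict_iff' measurableSet_uIoc).2 (ae_of_all _ fun x hx => ?_)
      rw [Set.uIoc_of_le hab] at hx
      obtain ⟨h1, h2⟩ := hσb x ⟨le_trans ha hx.1.le, hx.2.trans hb1⟩
      rw [Real.norm_eq_abs, abs_pow]
      exact pow_le_pow_left₀ (abs_nonneg _) (abs_le.2 ⟨by linarith, h2⟩) 2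
    exact Measure.integrableOn_of_bounded hfin ((hσm.pow_const 2).aestronglyMeasurable) hbd
  -- lower bound
  have hlow : ∀ (σ : ℝ → ℝ), Measurable σ → (∀ u ∈ Set.Icc (0:ℝ) 1, σ u ∈ Set.Icc κ K) →
      ∀ a b : ℝ, 0 ≤ a → a ≤ b → b ≤ 1 →
      κ ^ 2 * (b - a) ≤ ∫ u in a..b, σ u ^ 2 := by
    intro σ hσm hσb a b ha hab hb1
    have h := intervalIntegral.integral_mono_on (f := fun _ => κ ^ 2)
      (g := fun u => σ u ^ 2) hab (intervalIntegrable_const)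
      (hii σ hσm hσb a b ha hab hb1) (fun x hx => by
        obtain ⟨h1, h2⟩ := hσb x ⟨le_trans ha hx.1, hx.2.trans hb1⟩
        exact pow_le_pow_left₀ hκ.le h1 2)
    simpa [intervalIntegral.integral_const, smul_eq_mul, mul_comm] using h
  -- difference of integrals of squares
  have hdiff : ∀ a b : ℝ, 0 ≤ a → a ≤ b → b ≤ 1 →
      |(∫ u in a..b, σ₁ u ^ 2) - ∫ u in a..b, σ₂ u ^ 2| ≤ 2 * K * M * (b - a) := by
    intro a b ha hab hb1
    rw [← intervalIntegral.integral_sub (hii σ₁ hσ₁ hσ₁b a b ha hab hb1)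
      (hii σ₂ hσ₂ hσ₂b a b ha hab hb1)]
    have h := intervalIntegral.norm_integral_le_of_norm_le_const (C := 2 * K * M)
      (f := fun u => σ₁ u ^ 2 - σ₂ u ^ 2) (a := a) (b := b) ?_
    · rwa [Real.norm_eq_abs, abs_of_nonneg (sub_nonneg.2 hab)] at h
    · intro x hx
      rw [Set.uIoc_of_le hab] at hx
      have hxI : x ∈ Set.Icc (0:ℝ) 1 := ⟨le_trans ha hx.1.le, hx.2.trans hb1⟩
      obtain ⟨h1a, h1b⟩ := hσ₁b x hxI
      obtain ⟨h2a, h2b⟩ := hσ₂b x hxI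
      show ‖σ₁ x ^ 2 - σ₂ x ^ 2‖ ≤ 2 * K * M
      rw [Real.norm_eq_abs]
      have he : σ₁ x ^ 2 - σ₂ x ^ 2 = (σ₁ x + σ₂ x) * (σ₁ x - σ₂ x) := by ring
      rw [he, abs_mul]
      have hA : |σ₁ x + σ₂ x| ≤ 2 * K := by rw [abs_le]; constructor <;> linarith
      calc |σ₁ x + σ₂ x| * |σ₁ x - σ₂ x| ≤ (2 * K) * M :=
            mul_le_mul hA (hM x hxI) (abs_nonneg _) (by positivity)
        _ = 2 * K * M := by ring
  -- per-term bound
  have hterm : ∀ i ∈ Finset.Icc 1 n,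
      |1 / (∫ u in ((i:ℝ) - 1) / n..(i:ℝ) / n, σ₁ u ^ 2) -
       1 / (∫ u in ((i:ℝ) - 1) / n..(i:ℝ) / n, σ₂ u ^ 2)| ≤ 2 * K * M * n / κ ^ 4 := by
    intro i hi
    obtain ⟨hi1, hin⟩ := Finset.mem_Icc.1 hi
    have hi1' : (1:ℝ) ≤ (i:ℝ) := by exact_mod_cast hi1
    have hin' : (i:ℝ) ≤ n := by exact_mod_cast hin
    set a := ((i:ℝ) - 1) / n with hadef
    set b := (i:ℝ) / n with hbdef
    have ha : 0 ≤ a := div_nonneg (by linarith) hn'.le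
    have hab : a ≤ b := (div_le_div_iff_of_pos_right hn').2 (by linarith)
    have hb1 : b ≤ 1 := (div_le_one hn').2 hin'
    have hba : b - a = 1 / n := by rw [hbdef, hadef, div_sub_div_same]; congr 1; ring
    set I₁ := ∫ u in a..b, σ₁ u ^ 2 with hI1def
    set I₂ := ∫ u in a..b, σ₂ u ^ 2 with hI2def
    have hI₁ : κ ^ 2 / n ≤ I₁ := by
      have h := hlow σ₁ hσ₁ hσ₁b a b ha hab hb1
      rwa [hba, mul_one_div] at h
    have hI₂ : κ ^ 2 / n ≤ I₂ := by
      have h := hlow σ₂ hσ₂ hσ₂b a b ha hab hb1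
      rwa [hba, mul_one_div] at h
    have hI₁0 : 0 < I₁ := lt_of_lt_of_le (by positivity) hI₁
    have hI₂0 : 0 < I₂ := lt_of_lt_of_le (by positivity) hI₂
    have hd : |I₁ - I₂| ≤ 2 * K * M / n := by
      have h := hdiff a b ha hab hb1
      rwa [hba, mul_one_div] at h
    have heq : 1 / I₁ - 1 / I₂ = (I₂ - I₁) / (I₁ * I₂) := by
      field_simp
    rw [heq, abs_div, abs_of_pos (mul_pos hI₁0 hI₂0)]
    have h1 : |I₂ - I₁| ≤ 2 * K * M / n := by rw [abs_sub_comm]; exact hd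
    have h2 : κ ^ 2 / n * (κ ^ 2 / n) ≤ I₁ * I₂ :=
      mul_le_mul hI₁ hI₂ (by positivity) (le_trans (by positivity) hI₁)
    calc |I₂ - I₁| / (I₁ * I₂) ≤ (2 * K * M / n) / (κ ^ 2 / n * (κ ^ 2 / n)) :=
          div_le_div₀ (by positivity) h1 (by positivity) h2
      _ = 2 * K * M * n / κ ^ 4 := by field_simp
  set S := ∑ i ∈ Finset.Icc 1 n, (X ((i:ℝ) / n) - X (((i:ℝ) - 1) / n)) ^ 2 with hSdef
  have hS0 : 0 ≤ S := Finset.sum_nonneg fun i _ => sq_nonneg _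
  -- T difference
  have hTdiff : |T σ₁ - T σ₂| ≤ (K / κ ^ 4) * M * S := by
    have e : T σ₁ - T σ₂ = -(1 / (2 * (n:ℝ))) * ∑ i ∈ Finset.Icc 1 n,
        (X ((i:ℝ) / n) - X (((i:ℝ) - 1) / n)) ^ 2 *
          (1 / (∫ u in ((i:ℝ) - 1) / n..(i:ℝ) / n, σ₁ u ^ 2) -
           1 / (∫ u in ((i:ℝ) - 1) / n..(i:ℝ) / n, σ₂ u ^ 2)) := by
      rw [hT σ₁, hT σ₂, ← mul_sub, ← Finset.sum_sub_distrib]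
      congr 1
      apply Finset.sum_congr rfl
      intro i _
      ring
    rw [e, abs_mul, abs_neg, abs_of_pos (by positivity : (0:ℝ) < 1 / (2 * (n:ℝ)))]
    have hsum : |∑ i ∈ Finset.Icc 1 n,
        (X ((i:ℝ) / n) - X (((i:ℝ) - 1) / n)) ^ 2 *
          (1 / (∫ u in ((i:ℝ) - 1) / n..(i:ℝ) / n, σ₁ u ^ 2) -
           1 / (∫ u in ((i:ℝ) - 1) / n..(i:ℝ) / n, σ₂ u ^ 2))| ≤
        (2 * K * M * n / κ ^ 4) * S := by
      calc |∑ i ∈ Finset.Icc 1 n,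
          (X ((i:ℝ) / n) - X (((i:ℝ) - 1) / n)) ^ 2 *
            (1 / (∫ u in ((i:ℝ) - 1) / n..(i:ℝ) / n, σ₁ u ^ 2) -
             1 / (∫ u in ((i:ℝ) - 1) / n..(i:ℝ) / n, σ₂ u ^ 2))| ≤
          ∑ i ∈ Finset.Icc 1 n, |(X ((i:ℝ) / n) - X (((i:ℝ) - 1) / n)) ^ 2 *
            (1 / (∫ u in ((i:ℝ) - 1) / n..(i:ℝ) / n, σ₁ u ^ 2) -
             1 / (∫ u in ((i:ℝ) - 1) / n..(i:ℝ) / n, σ₂ u ^ 2))| :=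
            Finset.abs_sum_le_sum_abs _ _
        _ ≤ ∑ i ∈ Finset.Icc 1 n,
              (X ((i:ℝ) / n) - X (((i:ℝ) - 1) / n)) ^ 2 * (2 * K * M * n / κ ^ 4) := by
            apply Finset.sum_le_sum
            intro i hi
            rw [abs_mul, abs_of_nonneg (sq_nonneg _)]
            exact mul_le_mul_of_nonneg_left (hterm i hi) (sq_nonneg _)
        _ = (2 * K * M * n / κ ^ 4) * S := by rw [← Finset.sum_mul, mul_comm]
    calc 1 / (2 * (n:ℝ)) * |∑ i ∈ Finset.Icc 1 n,
          (X ((i:ℝ) / n) - X (((i:ℝ) - 1) / n)) ^ 2 *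
            (1 / (∫ u in ((i:ℝ) - 1) / n..(i:ℝ) / n, σ₁ u ^ 2) -
             1 / (∫ u in ((i:ℝ) - 1) / n..(i:ℝ) / n, σ₂ u ^ 2))| ≤
        1 / (2 * (n:ℝ)) * ((2 * K * M * n / κ ^ 4) * S) :=
          mul_le_mul_of_nonneg_left hsum (by positivity)
      _ = (K / κ ^ 4) * M * S := by field_simp
  -- integrability of the correction integrand
  have hfi : ∀ (σ : ℝ → ℝ), Measurable σ → (∀ u ∈ Set.Icc (0:ℝ) 1, σ u ∈ Set.Icc κ K) →
      IntervalIntegrable (fun u => (σ₀ u ^ 2 - σ u ^ 2) / σ u ^ 2) volume 0 1 := by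
    intro σ hσm hσb
    rw [intervalIntegrable_iff]
    have hfin : volume (Set.uIoc (0:ℝ) 1) ≠ ⊤ := by
      rw [Set.uIoc_of_le zero_le_one]; exact (measure_Ioc_lt_top).ne
    have hbd : ∀ᵐ x ∂(volume.restrict (Set.uIoc (0:ℝ) 1)),
        ‖(σ₀ x ^ 2 - σ x ^ 2) / σ x ^ 2‖ ≤ K ^ 2 / κ ^ 2 := by
      refine (ae_restrict_iff' measurableSet_uIoc).2 (ae_of_all _ fun x hx => ?_)
      rw [Set.uIoc_of_le zero_le_one] at hx
      have hxI : x ∈ Set.Icc (0:ℝ) 1 := ⟨hx.1.le, hx.2⟩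
      obtain ⟨h0a, h0b⟩ := hσ₀b x hxI
      obtain ⟨h1a, h1b⟩ := hσb x hxI
      have hd0 : (0:ℝ) < σ x ^ 2 := pow_pos (lt_of_lt_of_le hκ h1a) 2
      show ‖(σ₀ x ^ 2 - σ x ^ 2) / σ x ^ 2‖ ≤ K ^ 2 / κ ^ 2
      have h0sq : σ₀ x ^ 2 ≤ K ^ 2 := pow_le_pow_left₀ (le_trans hκ.le h0a) h0b 2
      have h0sq' : κ ^ 2 ≤ σ₀ x ^ 2 := pow_le_pow_left₀ hκ.le h0a 2
      have h1sq : σ x ^ 2 ≤ K ^ 2 := pow_le_pow_left₀ (le_trans hκ.le h1a) h1b 2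
      have h1sq' : κ ^ 2 ≤ σ x ^ 2 := pow_le_pow_left₀ hκ.le h1a 2
      rw [Real.norm_eq_abs, abs_div, abs_of_pos hd0]
      apply div_le_div₀ (by positivity) ?_ (by positivity) h1sq'
      rw [abs_le]
      constructor <;> nlinarith
    exact Measure.integrableOn_of_bounded hfin
      ((((hσ₀.pow_const 2).sub (hσm.pow_const 2)).div (hσm.pow_const 2)).aestronglyMeasurable) hbd
  -- correction term difference
  have hA : |(1 / 2) * (∫ u in (0:ℝ)..1, (σ₀ u ^ 2 - σ₁ u ^ 2) / σ₁ u ^ 2) -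
      (1 / 2) * (∫ u in (0:ℝ)..1, (σ₀ u ^ 2 - σ₂ u ^ 2) / σ₂ u ^ 2)| ≤ K ^ 3 / κ ^ 4 * M := by
    rw [← mul_sub, abs_mul, ← intervalIntegral.integral_sub (hfi σ₁ hσ₁ hσ₁b) (hfi σ₂ hσ₂ hσ₂b)]
    have hb := intervalIntegral.norm_integral_le_of_norm_le_const (C := 2 * K ^ 3 * M / κ ^ 4)
      (f := fun u => (σ₀ u ^ 2 - σ₁ u ^ 2) / σ₁ u ^ 2 - (σ₀ u ^ 2 - σ₂ u ^ 2) / σ₂ u ^ 2)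
      (a := 0) (b := 1) ?_
    · rw [Real.norm_eq_abs] at hb
      have h12 : |(1:ℝ)/2| = 1/2 := abs_of_pos one_half_pos
      rw [h12]
      calc (1/2) * |∫ u in (0:ℝ)..1, ((σ₀ u ^ 2 - σ₁ u ^ 2) / σ₁ u ^ 2 -
            (σ₀ u ^ 2 - σ₂ u ^ 2) / σ₂ u ^ 2)| ≤
          (1/2) * (2 * K ^ 3 * M / κ ^ 4 * |1 - 0|) :=
            mul_le_mul_of_nonneg_left hb (by norm_num)
        _ = K ^ 3 / κ ^ 4 * M := by rw [abs_of_pos (by norm_num : (0:ℝ) < 1 - 0)]; ring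
    · intro x hx
      rw [Set.uIoc_of_le zero_le_one] at hx
      have hxI : x ∈ Set.Icc (0:ℝ) 1 := ⟨hx.1.le, hx.2⟩
      obtain ⟨h0a, h0b⟩ := hσ₀b x hxI
      obtain ⟨h1a, h1b⟩ := hσ₁b x hxI
      obtain ⟨h2a, h2b⟩ := hσ₂b x hxI
      have hp1 : (0:ℝ) < σ₁ x ^ 2 := pow_pos (lt_of_lt_of_le hκ h1a) 2
      have hp2 : (0:ℝ) < σ₂ x ^ 2 := pow_pos (lt_of_lt_of_le hκ h2a) 2
      have hne1 : σ₁ x ≠ 0 := ne_of_gt (lt_of_lt_of_le hκ h1a)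
      have hne2 : σ₂ x ≠ 0 := ne_of_gt (lt_of_lt_of_le hκ h2a)
      show ‖(σ₀ x ^ 2 - σ₁ x ^ 2) / σ₁ x ^ 2 - (σ₀ x ^ 2 - σ₂ x ^ 2) / σ₂ x ^ 2‖ ≤
        2 * K ^ 3 * M / κ ^ 4
      have e : (σ₀ x ^ 2 - σ₁ x ^ 2) / σ₁ x ^ 2 - (σ₀ x ^ 2 - σ₂ x ^ 2) / σ₂ x ^ 2 =
          σ₀ x ^ 2 * ((σ₂ x ^ 2 - σ₁ x ^ 2) / (σ₁ x ^ 2 * σ₂ x ^ 2)) := by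
        field_simp
        ring
      rw [Real.norm_eq_abs, e, abs_mul, abs_div, abs_of_pos (mul_pos hp1 hp2)]
      have h0sq : |σ₀ x ^ 2| ≤ K ^ 2 := by
        rw [abs_of_pos (pow_pos (lt_of_lt_of_le hκ h0a) 2)]
        exact pow_le_pow_left₀ (le_trans hκ.le h0a) h0b 2
      have hnum : |σ₂ x ^ 2 - σ₁ x ^ 2| ≤ 2 * K * M := by
        have he2 : σ₂ x ^ 2 - σ₁ x ^ 2 = (σ₂ x + σ₁ x) * (σ₂ x - σ₁ x) := by ring
        rw [he2, abs_mul]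
        have hA' : |σ₂ x + σ₁ x| ≤ 2 * K := by rw [abs_le]; constructor <;> linarith
        have hB' : |σ₂ x - σ₁ x| ≤ M := by rw [abs_sub_comm]; exact hM x hxI
        calc |σ₂ x + σ₁ x| * |σ₂ x - σ₁ x| ≤ (2 * K) * M :=
              mul_le_mul hA' hB' (abs_nonneg _) (by positivity)
          _ = 2 * K * M := by ring
      have hden : κ ^ 4 ≤ σ₁ x ^ 2 * σ₂ x ^ 2 := by
        have ha1 : κ ^ 2 ≤ σ₁ x ^ 2 := pow_le_pow_left₀ hκ.le h1a 2
        have ha2 : κ ^ 2 ≤ σ₂ x ^ 2 := pow_le_pow_left₀ hκ.le h2a 2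
        calc κ ^ 4 = κ ^ 2 * κ ^ 2 := by ring
          _ ≤ σ₁ x ^ 2 * σ₂ x ^ 2 := mul_le_mul ha1 ha2 (by positivity) (by positivity)
      calc |σ₀ x ^ 2| * (|σ₂ x ^ 2 - σ₁ x ^ 2| / (σ₁ x ^ 2 * σ₂ x ^ 2)) ≤
            K ^ 2 * ((2 * K * M) / κ ^ 4) :=
            mul_le_mul h0sq (div_le_div₀ (by positivity) hnum (by positivity) hden)
              (by positivity) (by positivity)
        _ = 2 * K ^ 3 * M / κ ^ 4 := by ring
  -- assemble
  rw [hQ σ₁, hQ σ₂]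
  calc |(|T σ₁ + (1/2) * ∫ u in (0:ℝ)..1, (σ₀ u ^ 2 - σ₁ u ^ 2) / σ₁ u ^ 2|) -
        (|T σ₂ + (1/2) * ∫ u in (0:ℝ)..1, (σ₀ u ^ 2 - σ₂ u ^ 2) / σ₂ u ^ 2|)| ≤
      |(T σ₁ + (1/2) * ∫ u in (0:ℝ)..1, (σ₀ u ^ 2 - σ₁ u ^ 2) / σ₁ u ^ 2) -
       (T σ₂ + (1/2) * ∫ u in (0:ℝ)..1, (σ₀ u ^ 2 - σ₂ u ^ 2) / σ₂ u ^ 2)| :=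
        abs_abs_sub_abs_le_abs_sub _ _
    _ = |(T σ₁ - T σ₂) + ((1/2) * (∫ u in (0:ℝ)..1, (σ₀ u ^ 2 - σ₁ u ^ 2) / σ₁ u ^ 2) -
        (1/2) * (∫ u in (0:ℝ)..1, (σ₀ u ^ 2 - σ₂ u ^ 2) / σ₂ u ^ 2))| := by
        congr 1; ring
    _ ≤ |T σ₁ - T σ₂| + |(1/2) * (∫ u in (0:ℝ)..1, (σ₀ u ^ 2 - σ₁ u ^ 2) / σ₁ u ^ 2) -
        (1/2) * (∫ u in (0:ℝ)..1, (σ₀ u ^ 2 - σ₂ u ^ 2) / σ₂ u ^ 2)| := abs_add_le _ _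
    _ ≤ (K / κ ^ 4) * M * S + K ^ 3 / κ ^ 4 * M := add_le_add hTdiff hA
    _ = (K / κ ^ 4) * M * S + (K ^ 3 / κ ^ 4) * M := by ring
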